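/- Let θ̃^t be a real sequence with update θ̃^{t+1} = θ̃^t − μ(N^t − α), where μ > 0, α ∈ [0,1], each N^t ∈ [0,1], and N^t = 0 whenever θ̃^t < δ for a constant δ satisfying δ > μ(1−α). If θ̃^1 ≥ δ − μ(1−α), then θ̃^t ≥ δ − μ(1−α) > 0 for all t ≥ 1. -/
import Mathlib

theorem stmt0 (θ N : ℕ → ℝ) (μ α δ : ℝ)
    (hμ : 0 < μ) (hα0 : 0 ≤ α) (hα1 : α ≤ 1)
    (hupd : ∀ t, 1 ≤ t → θ (t + 1) = θ t - μ * (N t - α))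
    (hN : ∀ t, 1 ≤ t → N t ∈ Set.Icc (0 : ℝ) 1)
    (hN0 : ∀ t, 1 ≤ t → θ t < δ → N t = 0)
    (hδ : δ > μ * (1 - α))
    (hinit : θ 1 ≥ δ - μ * (1 - α)) :
    ∀ t, 1 ≤ t → θ t ≥ δ - μ * (1 - α) ∧ (0 : ℝ) < δ - μ * (1 - α) := by
  have hpos : (0 : ℝ) < δ - μ * (1 - α) := by linarith
  intro t ht
  refine ⟨?_, hpos⟩
  induction t with
  | zero => omega
  | succ n ih =>
    rcases Nat.eq_or_lt_of_le ht with h | h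
    · simpa [← h] using hinit
    · have hn : 1 ≤ n := by omega
      have ihn := ih hn
      rw [hupd n hn]
      by_cases hc : θ n < δ
      · have := hN0 n hn hc
        rw [this]
        nlinarith
      · push_neg at hc
        have hN1 := (hN n hn).2
        nlinarith
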